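/- Let m,n be relatively prime integers with n > 0 and 0 ≤ m ≤ n, and let F : ℤ² → [0,∞] be arbitrary. Define R_t(s) = ⌊(m/n)(t+s)+1⌋ − ⌊(m/n)s⌋ for s ∈ {0,…,n−t−1} and R_t(s) = m + ⌊(m/n)(s−(n−t))+1⌋ − ⌊(m/n)s⌋ for s ∈ {n−t,…,n−1}. Then Σ_{t=0}^{n−1} Σ_{s=0}^{n−1} Σ_{k∈ℤ} Σ_{i=0}^{∞} (i+1) · F(kn+t, km+R_t(s)+i) = √(n²+m²) · Σ_{(x,y)∈ℤ², y > (m/n)x} dist((x,y), G) · F(x,y), where G = {(t,(m/n)t) : t ∈ ℝ} and dist is the Euclidean distance from a point to this line (both sides are sums of nonnegative terms, possibly infinite). -/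

import Mathlib

open ENNReal

noncomputable section

/-- Euclidean distance from the point `p ∈ ℤ²` to the line `G = {(t,(m/n)t) : t ∈ ℝ}`. -/
def distToGraph (m n : ℕ) (p : ℤ × ℤ) : ℝ :=
  sInf (Set.range fun t : ℝ =>
    Real.sqrt (((p.1 : ℝ) - t) ^ 2 + ((p.2 : ℝ) - (m : ℝ) / n * t) ^ 2))

lemma ediv_add_bounds {N : ℤ} (hN : 0 < N) (a b : ℤ) :
    a / N + b / N ≤ (a + b) / N ∧ (a + b) / N ≤ a / N + b / N + 1 := by
  have ha := Int.mul_ediv_add_emod a N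
  have hb := Int.mul_ediv_add_emod b N
  have hab := Int.mul_ediv_add_emod (a + b) N
  have ra0 := Int.emod_nonneg a hN.ne'
  have rb0 := Int.emod_nonneg b hN.ne'
  have rab0 := Int.emod_nonneg (a + b) hN.ne'
  have ra1 := Int.emod_lt_of_pos a hN
  have rb1 := Int.emod_lt_of_pos b hN
  have rab1 := Int.emod_lt_of_pos (a + b) hN
  set qa := a / N; set qb := b / N; set q := (a + b) / N
  have h1 : N * (q - qa - qb) = a % N + b % N - (a + b) % N := by ring_nf; linarith
  have h2 : -N < N * (q - qa - qb) := by linarith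
  have h3 : N * (q - qa - qb) < 2 * N := by linarith
  have h4 : (-1 : ℤ) < q - qa - qb := by
    by_contra h; push_neg at h; nlinarith
  have h5 : q - qa - qb < 2 := by
    by_contra h; push_neg at h; nlinarith
  omega

lemma ediv_lt_iff' {N a y : ℤ} (hN : 0 < N) : a / N < y ↔ a < N * y := by
  rw [Int.ediv_lt_iff_lt_mul hN, mul_comm]

lemma int_tsum_shift (h : ℤ → ℝ≥0∞) (b : ℤ) (h0 : ∀ y : ℤ, y < b → h y = 0) :
    ∑' y : ℤ, h y = ∑' j : ℕ, h (b + j) := by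
  refine (Function.Injective.tsum_eq (g := fun j : ℕ => b + (j : ℤ)) ?_ ?_).symm
  · intro i j hij
    simpa using hij
  · intro y hy
    rcases lt_or_ge y b with h' | h'
    · exact absurd (h0 y h') hy
    · exact ⟨(y - b).toNat, by simp; omega⟩

lemma tsum_coeff_shift (G : ℤ → ℝ≥0∞) (b : ℤ) (d : ℕ) (hd : d ≤ 1) :
    ∑' i : ℕ, ((i : ℝ≥0∞) + 1) * G (b + (d : ℤ) + (i : ℤ)) =
      ∑' j : ℕ, ((j + 1 - d : ℕ) : ℝ≥0∞) * G (b + (j : ℤ)) := by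
  interval_cases d
  · apply tsum_congr; intro i
    norm_num
  · calc ∑' i : ℕ, ((i : ℝ≥0∞) + 1) * G (b + ((1:ℕ) : ℤ) + (i : ℤ))
        = ∑' i : ℕ, (fun j : ℕ => (j : ℝ≥0∞) * G (b + (j : ℤ))) (i + 1) := by
          apply tsum_congr; intro i
          simp only []
          have h1 : ((i : ℝ≥0∞) + 1) = ((i + 1 : ℕ) : ℝ≥0∞) := by push_cast; ring
          have h2 : b + ((1:ℕ) : ℤ) + (i : ℤ) = b + ((i + 1 : ℕ) : ℤ) := by push_cast; ring
          rw [h1, h2]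
      _ = ∑' j : ℕ, (j : ℝ≥0∞) * G (b + (j : ℤ)) := by
          refine Function.Injective.tsum_eq (g := fun i : ℕ => i + 1)
            (f := fun j : ℕ => (j : ℝ≥0∞) * G (b + (j : ℤ))) (add_left_injective 1) ?_
          intro j hj
          rcases j with _ | j
          · simp at hj
          · exact ⟨j, rfl⟩
      _ = ∑' j : ℕ, ((j + 1 - 1 : ℕ) : ℝ≥0∞) * G (b + (j : ℤ)) := by
          apply tsum_congr; intro j; simp

section RtArith
variable {m n : ℕ} {Rt : ℕ → ℕ → ℤ}

lemma Rt_eq' (hn : 0 < n)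
    (hRt1 : ∀ t s : ℕ, t < n → s + t + 1 ≤ n →
      Rt t s = ⌊(m : ℚ) * ((t : ℚ) + (s : ℚ)) / n + 1⌋ - ⌊(m : ℚ) * (s : ℚ) / n⌋)
    (hRt2 : ∀ t s : ℕ, t < n → s < n → n ≤ s + t →
      Rt t s = m + ⌊(m : ℚ) * ((s : ℚ) - ((n : ℚ) - (t : ℚ))) / n + 1⌋ -
        ⌊(m : ℚ) * (s : ℚ) / n⌋)
    (t s : ℕ) (ht : t < n) (hs : s < n) :
    Rt t s = ((m : ℤ) * ((s : ℤ) + (t : ℤ))) / (n : ℤ) - ((m : ℤ) * (s : ℤ)) / (n : ℤ) + 1 := by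
  have hfl2 : ⌊(m : ℚ) * (s : ℚ) / n⌋ = ((m : ℤ) * (s : ℤ)) / (n : ℤ) := by
    have e : (m : ℚ) * (s : ℚ) / n = (((m : ℤ) * (s : ℤ) : ℤ) : ℚ) / (n : ℕ) := by
      push_cast; ring
    rw [e, Rat.floor_intCast_div_natCast]
  rcases le_or_gt (s + t + 1) n with h | h
  · rw [hRt1 t s ht h]
    have e : (m : ℚ) * ((t : ℚ) + (s : ℚ)) / n = (((m : ℤ) * ((s : ℤ) + (t : ℤ)) : ℤ) : ℚ) / (n : ℕ) := by
      push_cast; ring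
    rw [Int.floor_add_one, e, Rat.floor_intCast_div_natCast, hfl2]
    ring
  · rw [hRt2 t s ht hs (by omega)]
    have e : (m : ℚ) * ((s : ℚ) - ((n : ℚ) - (t : ℚ))) / n
        = (((m : ℤ) * ((s : ℤ) + (t : ℤ)) + (-(m : ℤ)) * (n : ℤ) : ℤ) : ℚ) / (n : ℕ) := by
      push_cast; ring
    rw [Int.floor_add_one, e, Rat.floor_intCast_div_natCast, hfl2,
      Int.add_mul_ediv_right _ _ (by exact_mod_cast hn.ne' : (n : ℤ) ≠ 0)]
    ring

lemma sum_ediv_shift (hn : 0 < n) (u : ℕ) :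
    ∑ s ∈ Finset.range n, ((m : ℤ) * ((s : ℤ) + (u : ℤ))) / (n : ℤ)
      = (∑ s ∈ Finset.range n, ((m : ℤ) * (s : ℤ)) / (n : ℤ)) + (m : ℤ) * (u : ℤ) := by
  induction u with
  | zero => simp
  | succ u ih =>
    have step : ∑ s ∈ Finset.range n, ((m : ℤ) * ((s : ℤ) + ((u + 1 : ℕ) : ℤ))) / (n : ℤ)
        = ∑ s ∈ Finset.range n, (fun s : ℕ => ((m : ℤ) * ((s : ℤ) + (u : ℤ))) / (n : ℤ)) (s + 1) := by
      refine Finset.sum_congr rfl fun s _ => ?_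
      congr 1
      push_cast; ring
    rw [step]
    have h2 := Finset.sum_range_succ' (fun s : ℕ => ((m : ℤ) * ((s : ℤ) + (u : ℤ))) / (n : ℤ)) n
    have h3 := Finset.sum_range_succ (fun s : ℕ => ((m : ℤ) * ((s : ℤ) + (u : ℤ))) / (n : ℤ)) n
    have h4 : ((m : ℤ) * (((n : ℕ) : ℤ) + (u : ℤ))) / (n : ℤ)
        = ((m : ℤ) * ((0 : ℤ) + (u : ℤ))) / (n : ℤ) + (m : ℤ) := by
      have : (m : ℤ) * (((n : ℕ) : ℤ) + (u : ℤ)) = (m : ℤ) * ((0 : ℤ) + (u : ℤ)) + (m : ℤ) * (n : ℤ) := by ring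
      rw [this, Int.add_mul_ediv_right _ _ (by exact_mod_cast hn.ne' : (n : ℤ) ≠ 0)]
    have : ∑ s ∈ Finset.range n, (fun s : ℕ => ((m : ℤ) * ((s : ℤ) + (u : ℤ))) / (n : ℤ)) (s + 1)
        = ∑ s ∈ Finset.range n, ((m : ℤ) * ((s : ℤ) + (u : ℤ))) / (n : ℤ) + (m : ℤ) := by
      push_cast at h2 h3 h4 ⊢
      omega
    rw [this, ih]
    push_cast; ring
end RtArith

lemma sqrt_mul_dist {m n : ℕ} (hn : 0 < n) (p : ℤ × ℤ) :
    Real.sqrt ((n : ℝ) ^ 2 + (m : ℝ) ^ 2) * distToGraph m n p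
      = |(n : ℝ) * (p.2 : ℝ) - (m : ℝ) * (p.1 : ℝ)| := by
  have hn' : (0 : ℝ) < n := by exact_mod_cast hn
  set c : ℝ := (m : ℝ) / n with hc
  set x : ℝ := (p.1 : ℝ)
  set y : ℝ := (p.2 : ℝ)
  have hc2 : (0 : ℝ) < 1 + c ^ 2 := by positivity
  set t0 : ℝ := (x + c * y) / (1 + c ^ 2) with ht0
  have hid : ∀ t : ℝ, (x - t) ^ 2 + (y - c * t) ^ 2
      = (y - c * x) ^ 2 / (1 + c ^ 2) + (1 + c ^ 2) * (t - t0) ^ 2 := by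
    intro t
    rw [ht0]
    field_simp
    ring
  have hval : distToGraph m n p = Real.sqrt ((y - c * x) ^ 2 / (1 + c ^ 2)) := by
    unfold distToGraph
    apply le_antisymm
    · refine csInf_le ⟨0, ?_⟩ ⟨t0, ?_⟩
      · rintro r ⟨t, rfl⟩
        exact Real.sqrt_nonneg _
      · show Real.sqrt ((x - t0) ^ 2 + (y - c * t0) ^ 2) = _
        rw [hid t0]
        simp
    · refine le_csInf ⟨_, ⟨0, rfl⟩⟩ ?_
      rintro r ⟨t, rfl⟩
      apply Real.sqrt_le_sqrt
      rw [hid t]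
      nlinarith [sq_nonneg (t - t0), hc2.le, mul_nonneg hc2.le (sq_nonneg (t - t0))]
  rw [hval]
  have h1 : (y - c * x) ^ 2 / (1 + c ^ 2) = ((n : ℝ) * y - m * x) ^ 2 / ((n : ℝ) ^ 2 + m ^ 2) := by
    rw [hc]; field_simp
  rw [h1, Real.sqrt_div (sq_nonneg _), Real.sqrt_sq_eq_abs]
  have hpos : (0 : ℝ) < Real.sqrt ((n : ℝ) ^ 2 + m ^ 2) := Real.sqrt_pos.mpr (by positivity)
  field_simp

/-- the limit form of the normalized projection functional over a
vertical strip, written with the lattice-slope function `R_t`, equals the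
boundary form `√(n²+m²) · Σ_{(x,y)∈ℤ², y>(m/n)x} dist((x,y),G)·F(x,y)`. -/
theorem strip_limit_eq_geometric_boundary_form
    (m n : ℕ) (hn : 0 < n) (hmn : m ≤ n) (hcop : Nat.Coprime m n)
    (F : ℤ × ℤ → ℝ≥0∞)
    (Rt : ℕ → ℕ → ℤ)
    (hRt1 : ∀ t s : ℕ, t < n → s + t + 1 ≤ n →
      Rt t s = ⌊(m : ℚ) * ((t : ℚ) + (s : ℚ)) / n + 1⌋ - ⌊(m : ℚ) * (s : ℚ) / n⌋)
    (hRt2 : ∀ t s : ℕ, t < n → s < n → n ≤ s + t →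
      Rt t s = m + ⌊(m : ℚ) * ((s : ℚ) - ((n : ℚ) - (t : ℚ))) / n + 1⌋ -
        ⌊(m : ℚ) * (s : ℚ) / n⌋) :
    ∑ t ∈ Finset.range n, ∑ s ∈ Finset.range n,
        ∑' k : ℤ, ∑' i : ℕ,
          ((i : ℝ≥0∞) + 1) * F (k * (n : ℤ) + (t : ℤ), k * (m : ℤ) + Rt t s + (i : ℤ)) =
      ENNReal.ofReal (Real.sqrt ((n : ℝ) ^ 2 + (m : ℝ) ^ 2)) *
        ∑' p : ℤ × ℤ,
          if (m : ℝ) / n * (p.1 : ℝ) < (p.2 : ℝ)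
          then ENNReal.ofReal (distToGraph m n p) * F p else 0 := by
  haveI : NeZero n := ⟨hn.ne'⟩
  have hN : (0 : ℤ) < (n : ℤ) := by exact_mod_cast hn
  have hNne : ((n : ℤ)) ≠ 0 := hN.ne'
  have hn' : (0 : ℝ) < (n : ℝ) := by exact_mod_cast hn
  set A : ℕ → ℤ := fun t => ((m : ℤ) * (t : ℤ)) / (n : ℤ) with hA
  set d : ℕ → ℕ → ℕ := fun t s => (Rt t s - (A t + 1)).toNat with hd
  set W : ℤ → ℤ → ℝ≥0∞ := fun x y =>
    if (m : ℤ) * x < (n : ℤ) * y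
    then ENNReal.ofReal ((((n : ℤ) * y - (m : ℤ) * x : ℤ)) : ℝ) * F (x, y) else 0 with hW
  -- bounds on Rt
  have hbounds : ∀ t s : ℕ, t < n → s < n → A t + 1 ≤ Rt t s ∧ Rt t s ≤ A t + 2 := by
    intro t s ht hs
    have heq := Rt_eq' hn hRt1 hRt2 t s ht hs
    have hsplit : (m : ℤ) * ((s : ℤ) + (t : ℤ)) = (m : ℤ) * (s : ℤ) + (m : ℤ) * (t : ℤ) := by ring
    have hb := ediv_add_bounds hN ((m : ℤ) * (s : ℤ)) ((m : ℤ) * (t : ℤ))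
    rw [← hsplit] at hb
    constructor <;> [linarith [hb.1, heq.ge, heq.le]; linarith [hb.2, heq.ge, heq.le]]
  have hdprop : ∀ t s : ℕ, t < n → s < n →
      ((d t s : ℤ) = Rt t s - (A t + 1) ∧ d t s ≤ 1) := by
    intro t s ht hs
    have := hbounds t s ht hs
    constructor
    · simp only [hd]
      omega
    · simp only [hd]
      omega
  have hsumRt : ∀ t : ℕ, t < n →
      ∑ s ∈ Finset.range n, Rt t s = (m : ℤ) * (t : ℤ) + (n : ℤ) := by
    intro t ht
    rw [Finset.sum_congr rfl (fun s hs => Rt_eq' hn hRt1 hRt2 t s ht (Finset.mem_range.mp hs))]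
    rw [Finset.sum_add_distrib, Finset.sum_sub_distrib, sum_ediv_shift hn t]
    simp [Finset.sum_const, Finset.card_range]
  -- the key pointwise bridge
  have key : ∀ t : ℕ, t < n → ∀ k : ℤ,
      (∑ s ∈ Finset.range n, ∑' i : ℕ,
          ((i : ℝ≥0∞) + 1) * F (k * (n : ℤ) + (t : ℤ), k * (m : ℤ) + Rt t s + (i : ℤ)))
        = ∑' y : ℤ, W (k * (n : ℤ) + (t : ℤ)) y := by
    intro t ht k
    set x : ℤ := k * (n : ℤ) + (t : ℤ) with hx
    set b : ℤ := k * (m : ℤ) + A t + 1 with hb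
    have hdivx : ((m : ℤ) * x) / (n : ℤ) = k * (m : ℤ) + A t := by
      have e : (m : ℤ) * x = (m : ℤ) * (t : ℤ) + (k * (m : ℤ)) * (n : ℤ) := by rw [hx]; ring
      rw [e, Int.add_mul_ediv_right _ _ hNne, hA, add_comm]
    -- RHS form
    have hR : ∑' y : ℤ, W x y
        = ∑' j : ℕ, ENNReal.ofReal ((((n : ℤ) * (b + (j : ℤ)) - (m : ℤ) * x : ℤ)) : ℝ)
            * F (x, b + (j : ℤ)) := by
      rw [int_tsum_shift (fun y => W x y) b ?_]
      · apply tsum_congr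
        intro j
        have hcond : (m : ℤ) * x < (n : ℤ) * (b + (j : ℤ)) := by
          rw [← ediv_lt_iff' hN, hdivx, hb]
          have : (0 : ℤ) ≤ (j : ℤ) := Int.natCast_nonneg j
          omega
        simp only [hW]
        rw [if_pos hcond]
      · intro y hy
        have hcond : ¬ ((m : ℤ) * x < (n : ℤ) * y) := by
          rw [← ediv_lt_iff' hN, hdivx]
          omega
        simp only [hW]
        rw [if_neg hcond]
    -- LHS form
    have hL : (∑ s ∈ Finset.range n, ∑' i : ℕ,
          ((i : ℝ≥0∞) + 1) * F (x, k * (m : ℤ) + Rt t s + (i : ℤ)))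
        = ∑' j : ℕ, ((∑ s ∈ Finset.range n, (j + 1 - d t s) : ℕ) : ℝ≥0∞)
            * F (x, b + (j : ℤ)) := by
      have hper : ∀ s ∈ Finset.range n,
          (∑' i : ℕ, ((i : ℝ≥0∞) + 1) * F (x, k * (m : ℤ) + Rt t s + (i : ℤ)))
            = ∑' j : ℕ, ((j + 1 - d t s : ℕ) : ℝ≥0∞) * F (x, b + (j : ℤ)) := by
        intro s hs
        have hds := hdprop t s ht (Finset.mem_range.mp hs)
        have harg : ∀ i : ℕ, k * (m : ℤ) + Rt t s + (i : ℤ)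
            = b + ((d t s : ℕ) : ℤ) + (i : ℤ) := by
          intro i
          rw [hb]
          linarith [hds.1]
        calc (∑' i : ℕ, ((i : ℝ≥0∞) + 1) * F (x, k * (m : ℤ) + Rt t s + (i : ℤ)))
            = ∑' i : ℕ, ((i : ℝ≥0∞) + 1) * (fun y => F (x, y)) (b + ((d t s : ℕ) : ℤ) + (i : ℤ)) := by
              apply tsum_congr; intro i; rw [harg i]
          _ = _ := tsum_coeff_shift (fun y => F (x, y)) b (d t s) hds.2
      rw [Finset.sum_congr rfl hper, ← Summable.tsum_finsetSum (fun s _ => ENNReal.summable)]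
      apply tsum_congr
      intro j
      rw [← Finset.sum_mul, ← Nat.cast_sum]
    -- coefficient identity
    have hcoeff : ∀ j : ℕ, ((∑ s ∈ Finset.range n, (j + 1 - d t s) : ℕ) : ℤ)
        = (n : ℤ) * (b + (j : ℤ)) - (m : ℤ) * x := by
      intro j
      have hsumd : ∑ s ∈ Finset.range n, ((d t s : ℕ) : ℤ)
          = (m : ℤ) * (t : ℤ) - (n : ℤ) * A t := by
        have : ∑ s ∈ Finset.range n, ((d t s : ℕ) : ℤ)
            = ∑ s ∈ Finset.range n, (Rt t s - (A t + 1)) :=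
          Finset.sum_congr rfl fun s hs => (hdprop t s ht (Finset.mem_range.mp hs)).1
        rw [this, Finset.sum_sub_distrib, hsumRt t ht]
        simp [Finset.sum_const, Finset.card_range]; ring
      have hcast : ((∑ s ∈ Finset.range n, (j + 1 - d t s) : ℕ) : ℤ)
          = ∑ s ∈ Finset.range n, ((j : ℤ) + 1 - ((d t s : ℕ) : ℤ)) := by
        rw [Nat.cast_sum]
        refine Finset.sum_congr rfl fun s hs => ?_
        have := (hdprop t s ht (Finset.mem_range.mp hs)).2
        omega
      rw [hcast, Finset.sum_sub_distrib, hsumd]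
      simp only [Finset.sum_const, Finset.card_range, nsmul_eq_mul]
      rw [hb, hx]
      ring
    rw [hL, hR]
    apply tsum_congr
    intro j
    congr 1
    rw [← hcoeff j]
    rw [show ((((∑ s ∈ Finset.range n, (j + 1 - d t s) : ℕ) : ℤ)) : ℝ)
        = ((∑ s ∈ Finset.range n, (j + 1 - d t s) : ℕ) : ℝ) by push_cast; ring,
      ENNReal.ofReal_natCast]
  -- pointwise RHS simplification
  have hpt : ∀ p : ℤ × ℤ,
      ENNReal.ofReal (Real.sqrt ((n : ℝ) ^ 2 + (m : ℝ) ^ 2)) *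
        (if (m : ℝ) / n * (p.1 : ℝ) < (p.2 : ℝ)
          then ENNReal.ofReal (distToGraph m n p) * F p else 0) = W p.1 p.2 := by
    intro p
    have hcond : ((m : ℝ) / n * (p.1 : ℝ) < (p.2 : ℝ)) ↔ ((m : ℤ) * p.1 < (n : ℤ) * p.2) := by
      rw [div_mul_eq_mul_div, div_lt_iff₀ hn']
      rw [show ((m : ℝ) * (p.1 : ℝ)) = (((m : ℤ) * p.1 : ℤ) : ℝ) by push_cast; ring,
        show ((p.2 : ℝ) * (n : ℝ)) = (((n : ℤ) * p.2 : ℤ) : ℝ) by push_cast; ring]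
      exact Int.cast_lt
    simp only [hW]
    by_cases h : (m : ℝ) / n * (p.1 : ℝ) < (p.2 : ℝ)
    · rw [if_pos h, if_pos (hcond.mp h), ← mul_assoc,
        ← ENNReal.ofReal_mul (Real.sqrt_nonneg _), sqrt_mul_dist hn p]
      congr 2
      have hpos : (0 : ℤ) < (n : ℤ) * p.2 - (m : ℤ) * p.1 := by
        have := hcond.mp h; omega
      have hposR : (0 : ℝ) < (((n : ℤ) * p.2 - (m : ℤ) * p.1 : ℤ) : ℝ) := by
        exact_mod_cast hpos
      rw [show ((n : ℝ) * (p.2 : ℝ) - (m : ℝ) * (p.1 : ℝ))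
          = (((n : ℤ) * p.2 - (m : ℤ) * p.1 : ℤ) : ℝ) by push_cast; ring]
      exact abs_of_pos hposR
    · rw [if_neg h, if_neg (fun hc => h (hcond.mpr hc)), mul_zero]
  -- restructure RHS
  calc ∑ t ∈ Finset.range n, ∑ s ∈ Finset.range n, ∑' k : ℤ, ∑' i : ℕ,
          ((i : ℝ≥0∞) + 1) * F (k * (n : ℤ) + (t : ℤ), k * (m : ℤ) + Rt t s + (i : ℤ))
      = ∑ t ∈ Finset.range n, ∑' k : ℤ, ∑ s ∈ Finset.range n, ∑' i : ℕ,
          ((i : ℝ≥0∞) + 1) * F (k * (n : ℤ) + (t : ℤ), k * (m : ℤ) + Rt t s + (i : ℤ)) := by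
        refine Finset.sum_congr rfl fun t ht => ?_
        rw [← Summable.tsum_finsetSum (fun s _ => ENNReal.summable)]
    _ = ∑ t ∈ Finset.range n, ∑' k : ℤ, ∑' y : ℤ, W (k * (n : ℤ) + (t : ℤ)) y := by
        refine Finset.sum_congr rfl fun t ht => tsum_congr fun k => ?_
        exact key t (Finset.mem_range.mp ht) k
    _ = ∑' k : ℤ, ∑ t ∈ Finset.range n, ∑' y : ℤ, W (k * (n : ℤ) + (t : ℤ)) y := by
        rw [Summable.tsum_finsetSum (fun t _ => ENNReal.summable)]
    _ = ∑' k : ℤ, ∑' r : Fin n, ∑' y : ℤ, W (k * (n : ℤ) + ((r : ℕ) : ℤ)) y := by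
        refine tsum_congr fun k => ?_
        rw [tsum_fintype]
        exact (Fin.sum_univ_eq_sum_range (fun t : ℕ => ∑' y : ℤ, W (k * (n : ℤ) + (t : ℤ)) y) n).symm
    _ = ∑' q : ℤ × Fin n, ∑' y : ℤ, W (q.1 * (n : ℤ) + ((q.2 : ℕ) : ℤ)) y := by
        rw [ENNReal.tsum_prod']
    _ = ∑' x : ℤ, ∑' y : ℤ, W x y := by
        rw [← Equiv.tsum_eq ((Int.divModEquiv n).symm) (fun x => ∑' y : ℤ, W x y)]
        exact tsum_congr fun q => by rw [Int.divModEquiv_symm_apply]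
    _ = ∑' p : ℤ × ℤ, W p.1 p.2 := by
        rw [ENNReal.tsum_prod']
    _ = ∑' p : ℤ × ℤ,
          ENNReal.ofReal (Real.sqrt ((n : ℝ) ^ 2 + (m : ℝ) ^ 2)) *
            (if (m : ℝ) / n * (p.1 : ℝ) < (p.2 : ℝ)
              then ENNReal.ofReal (distToGraph m n p) * F p else 0) :=
        (tsum_congr fun p => (hpt p).symm)
    _ = _ := ENNReal.tsum_mul_left
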